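/- Let P be a shift-invariant probability measure on Δ^ℤ (Δ finite) and let Q_P = {τ_w(P_ℕ) : w a finite word (including the empty word)}. If the linear span V_P of Q_P is finite dimensional, then the conditional future distribution P(X_{≥1} ∈ ·|X_{≤0}) takes values in V_P ∩ P(Δ^ℕ) almost surely; in particular the support of the causal state distribution is contained in the finite-dimensional affine set V_P ∩ P(Δ^ℕ). -/

import Mathlib

open MeasureTheory ProbabilityTheory Filter Topology

variable {Δ : Type*} [Fintype Δ] [MeasurableSpace Δ] [MeasurableSingletonClass Δ]
  [TopologicalSpace Δ] [DiscreteTopology Δ]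

/-- The `n`-fold one-sided shift on `Δ^ℕ`. -/
def shiftN (n : ℕ) : (ℕ → Δ) → (ℕ → Δ) := fun x k => x (k + n)

/-- The cylinder set `[w]` in `Δ^ℕ`. -/
def cylN {n : ℕ} (w : Fin n → Δ) : Set (ℕ → Δ) := {x | ∀ i : Fin n, x (i : ℕ) = w i}

/-- The future `X_ℕ = (X_1, X_2, …)` of a two-sided trajectory. -/
def futureMap : (ℤ → Δ) → (ℕ → Δ) := fun ω n => ω ((n : ℤ) + 1)

/-- The past `(X_0, X_{-1}, …)` of a two-sided trajectory. -/
def pastMap : (ℤ → Δ) → (ℕ → Δ) := fun ω n => ω (-(n : ℤ))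

/-- The σ-algebra generated by the past coordinates `X_k`, `k ≤ 0`. -/
def pastSA (Δ : Type*) [MeasurableSpace Δ] : MeasurableSpace (ℤ → Δ) :=
  MeasurableSpace.comap pastMap MeasurableSpace.pi

/-- `P_ℕ = P ∘ X_ℕ⁻¹`. -/
noncomputable def Pnat (P : Measure (ℤ → Δ)) : Measure (ℕ → Δ) := P.map futureMap

/-- `τ_w(Q)(B) = Q([w] ∩ σ^{-n} B)`. -/
noncomputable def tauMeas (Q : Measure (ℕ → Δ)) {n : ℕ} (w : Fin n → Δ) : Measure (ℕ → Δ) :=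
  (Q.restrict (cylN w)).map (shiftN n)

/-- The weak*-realization of a finite measure: the functional `f ↦ ∫ f dμ` on continuous
functions.  The space `C(X,ℝ) → ℝ` carries the topology of pointwise convergence, so that
convergence of these functionals is exactly weak* convergence of the measures. -/
noncomputable def funcOf {X : Type*} [TopologicalSpace X] [MeasurableSpace X]
    (μ : Measure X) : C(X, ℝ) → ℝ :=
  fun f => ∫ x, f x ∂μ

/-- The canonical OOM vector space `V_P`: the span of the functionals of the measures
`τ_w(P_ℕ)` over all finite words `w` (including the empty word). -/
noncomputable def VP (P : Measure (ℤ → Δ)) : Submodule ℝ (C((ℕ → Δ), ℝ) → ℝ) :=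
  Submodule.span ℝ {g | ∃ (n : ℕ) (w : Fin n → Δ), g = funcOf (tauMeas (Pnat P) w)}

/-- A version of the conditional distribution of the future given the past. -/
noncomputable def condFuture [StandardBorelSpace Δ] (P : Measure (ℤ → Δ)) [IsFiniteMeasure P]
    (ω : ℤ → Δ) : Measure (ℕ → Δ) :=
  ((condExpKernel P (pastSA Δ)) ω).map futureMap

/-- The conditional distribution of the future, as a probability measure. -/
noncomputable def condFutureP [StandardBorelSpace Δ] (P : Measure (ℤ → Δ))
    [IsProbabilityMeasure P] (ω : ℤ → Δ) : ProbabilityMeasure (ℕ → Δ) :=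
  ⟨condFuture P ω, by
    have hf : Measurable (futureMap (Δ := Δ)) :=
      measurable_pi_lambda _ fun n => measurable_pi_apply _
    haveI : IsProbabilityMeasure ((condExpKernel P (pastSA Δ)) ω) :=
      IsMarkovKernel.isProbabilityMeasure ω
    exact Measure.isProbabilityMeasure_map hf.aemeasurable⟩

/-- The causal state distribution `μ_C^P`: the law of the conditional future distribution,
a measure on `P(Δ^ℕ)`. -/
noncomputable def causalDist [StandardBorelSpace Δ]
    [MeasurableSpace (ProbabilityMeasure (ℕ → Δ))]
    (P : Measure (ℤ → Δ)) [IsProbabilityMeasure P] : Measure (ProbabilityMeasure (ℕ → Δ)) :=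
  P.map (condFutureP P)

/-- The topological support of a measure. -/
def msupport {X : Type*} [TopologicalSpace X] [MeasurableSpace X] (μ : Measure X) : Set X :=
  {x | ∀ U : Set X, IsOpen U → x ∈ U → μ U ≠ 0}

set_option linter.unusedSectionVars false

-- AUX
lemma measurable_futureMap : Measurable (futureMap (Δ := Δ)) :=
  measurable_pi_lambda _ fun _ => measurable_pi_apply _
lemma measurable_pastMap : Measurable (pastMap (Δ := Δ)) :=
  measurable_pi_lambda _ fun _ => measurable_pi_apply _
lemma measurable_shiftN (n : ℕ) : Measurable (shiftN (Δ := Δ) n) :=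
  measurable_pi_lambda _ fun _ => measurable_pi_apply _
lemma continuous_futureMap : Continuous (futureMap (Δ := Δ)) :=
  continuous_pi fun _ => continuous_apply _

lemma measurableSet_cylN {n} (w : Fin n → Δ) : MeasurableSet (cylN w) := by
  have : cylN w = ⋂ i : Fin n, (fun x : ℕ → Δ => x i) ⁻¹' {w i} := by
    ext x; simp [cylN]
  rw [this]
  exact MeasurableSet.iInter fun i => (measurable_pi_apply _) (measurableSet_singleton _)

lemma cylN_zero (w : Fin 0 → Δ) : cylN w = Set.univ := by
  ext x; simp [cylN]

lemma isPiSystem_cylN :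
    IsPiSystem {S : Set (ℕ → Δ) | ∃ (n : ℕ) (w : Fin n → Δ), S = cylN w} := by
  rintro _ ⟨n, w, rfl⟩ _ ⟨m, v, rfl⟩ hne
  obtain ⟨x, hxw, hxv⟩ := hne
  rcases le_total n m with h | h
  · refine ⟨m, v, ?_⟩
    apply subset_antisymm (Set.inter_subset_right)
    intro y hy
    refine ⟨fun i => ?_, hy⟩
    have : (i : ℕ) = ((⟨i, lt_of_lt_of_le i.isLt h⟩ : Fin m) : ℕ) := rfl
    rw [this, hy _, ← hxv _, ← this, hxw i]
  · refine ⟨n, w, ?_⟩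
    apply subset_antisymm (Set.inter_subset_left)
    intro y hy
    refine ⟨hy, fun i => ?_⟩
    have : (i : ℕ) = ((⟨i, lt_of_lt_of_le i.isLt h⟩ : Fin n) : ℕ) := rfl
    rw [this, hy _, ← hxw _, ← this, hxv i]

lemma generateFrom_cylN :
    (MeasurableSpace.pi : MeasurableSpace (ℕ → Δ)) =
      MeasurableSpace.generateFrom {S : Set (ℕ → Δ) | ∃ (n : ℕ) (w : Fin n → Δ), S = cylN w} := by
  apply le_antisymm
  · refine iSup_le fun i => ?_
    rw [MeasurableSpace.comap_le_iff_le_map]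
    intro s _
    have : (fun x : ℕ → Δ => x i) ⁻¹' s =
        ⋃ w ∈ {w : Fin (i+1) → Δ | w ⟨i, Nat.lt_succ_self i⟩ ∈ s}, cylN w := by
      ext x
      simp only [Set.mem_preimage, Set.mem_iUnion, Set.mem_setOf_eq]
      constructor
      · intro hx
        exact ⟨fun j => x j, by simpa using hx, fun j => rfl⟩
      · rintro ⟨w, hw, hxw⟩
        have := hxw ⟨i, Nat.lt_succ_self i⟩
        simp only at this
        rw [this]; exact hw
    rw [MeasurableSpace.map_def, this]  -- goal : MeasurableSet[generateFrom _] _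
    exact MeasurableSet.biUnion (Set.to_countable _)
      (fun w _ => MeasurableSpace.measurableSet_generateFrom ⟨i+1, w, rfl⟩)
  · refine MeasurableSpace.generateFrom_le ?_
    rintro _ ⟨n, w, rfl⟩
    exact measurableSet_cylN w

-- block B: stationarity
lemma iterate_shift (n : ℕ) (x : ℤ → Δ) :
    (fun (y : ℤ → Δ) (k : ℤ) => y (k + 1))^[n] x = fun k => x (k + n) := by
  induction n generalizing x with
  | zero => simp
  | succ m ih =>
    rw [Function.iterate_succ_apply, ih]
    funext k
    congr 1
    push_cast
    ring

lemma stationarity {n : ℕ} (w : Fin n → Δ) (P : Measure (ℤ → Δ)) [IsProbabilityMeasure P]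
    (hP : MeasurePreserving (fun (x : ℤ → Δ) (k : ℤ) => x (k + 1)) P P) :
    (P.restrict (pastMap ⁻¹' cylN w)).map futureMap =
      tauMeas (Pnat P) (fun i => w i.rev) := by
  have hiter := hP.iterate n
  ext B hB
  rw [Measure.map_apply measurable_futureMap hB,
    Measure.restrict_apply (measurable_futureMap hB)]
  rw [tauMeas, Measure.map_apply (measurable_shiftN n) hB,
    Measure.restrict_apply (measurable_shiftN n hB), Pnat,
    Measure.map_apply measurable_futureMap
      ((measurable_shiftN n hB).inter (measurableSet_cylN _))]
  have hset : (fun (x : ℤ → Δ) (k : ℤ) => x (k + 1))^[n] ⁻¹'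
      (futureMap ⁻¹' B ∩ pastMap ⁻¹' cylN w) =
      futureMap ⁻¹' (shiftN n ⁻¹' B ∩ cylN fun i => w i.rev) := by
    ext ω
    simp only [Set.mem_preimage, Set.mem_inter_iff, iterate_shift]
    constructor
    · rintro ⟨hBmem, hcyl⟩
      constructor
      · have : shiftN n (futureMap ω) = futureMap fun k => ω (k + n) := by
          funext k
          show ω (((k + n : ℕ) : ℤ) + 1) = ω (((k : ℤ) + 1) + n)
          congr 1; push_cast; ring
        rw [this]; exact hBmem
      · intro j
        have hj := hcyl j.rev
        show futureMap ω (j : ℕ) = w j.rev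
        have : ((j : ℕ) : ℤ) + 1 = -((j.rev : ℕ) : ℤ) + n := by
          rw [Fin.val_rev]
          have := j.isLt
          omega
        show ω (((j : ℕ) : ℤ) + 1) = w j.rev
        rw [this]; exact hj
    · rintro ⟨hBmem, hcyl⟩
      constructor
      · have : shiftN n (futureMap ω) = futureMap fun k => ω (k + n) := by
          funext k
          show ω (((k + n : ℕ) : ℤ) + 1) = ω (((k : ℤ) + 1) + n)
          congr 1; push_cast; ring
        rw [← this]; exact hBmem
      · intro i
        have hi := hcyl i.rev
        show ω (-((i : ℕ) : ℤ) + n) = w i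
        have : -((i : ℕ) : ℤ) + n = ((i.rev : ℕ) : ℤ) + 1 := by
          rw [Fin.val_rev]
          have := i.isLt
          omega
        rw [this]
        simpa [futureMap, Fin.rev_rev] using hi
  calc P (futureMap ⁻¹' B ∩ pastMap ⁻¹' cylN w)
      = P ((fun (x : ℤ → Δ) (k : ℤ) => x (k + 1))^[n] ⁻¹'
          (futureMap ⁻¹' B ∩ pastMap ⁻¹' cylN w)) :=
        (hiter.measure_preimage
          ((measurable_futureMap hB).inter
            (measurable_pastMap (measurableSet_cylN w))).nullMeasurableSet).symm
    _ = P (futureMap ⁻¹' (shiftN n ⁻¹' B ∩ cylN fun i => w i.rev)) := by rw [hset]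

-- block C
instance (Q : Measure (ℕ → Δ)) [IsFiniteMeasure Q] {n : ℕ} (w : Fin n → Δ) :
    IsFiniteMeasure (tauMeas Q w) := by
  unfold tauMeas
  infer_instance

instance (P : Measure (ℤ → Δ)) [IsProbabilityMeasure P] : IsProbabilityMeasure (Pnat P) :=
  Measure.isProbabilityMeasure_map measurable_futureMap.aemeasurable

lemma integrable_of_continuous {Y : Type*} [TopologicalSpace Y] [CompactSpace Y]
    [MeasurableSpace Y] [OpensMeasurableSpace Y] (μ : Measure Y) [IsFiniteMeasure μ]
    {h : Y → ℝ} (hc : Continuous h) : Integrable h μ := by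
  have := (BoundedContinuousFunction.mkOfCompact ⟨h, hc⟩).integrable μ
  exact this

lemma continuous_funcOf {X : Type*} [TopologicalSpace X] [MeasurableSpace X]
    [OpensMeasurableSpace X] [CompactSpace X] (μ : Measure X) [IsFiniteMeasure μ] :
    Continuous (funcOf μ) := by
  refine (LipschitzWith.of_dist_le_mul (K := (μ Set.univ).toNNReal) fun f g => ?_).continuous
  have hf : Integrable (fun x => f x) μ := integrable_of_continuous μ f.continuous
  have hg : Integrable (fun x => g x) μ := integrable_of_continuous μ g.continuous
  rw [Real.dist_eq]
  have : funcOf μ f - funcOf μ g = ∫ x, (f x - g x) ∂μ := (integral_sub hf hg).symm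
  rw [show |funcOf μ f - funcOf μ g| = ‖funcOf μ f - funcOf μ g‖ from rfl, this]
  have hb : ∀ᵐ x ∂μ, ‖f x - g x‖ ≤ dist f g :=
    Filter.Eventually.of_forall fun x => by
      rw [Real.norm_eq_abs, ← Real.dist_eq]; exact ContinuousMap.dist_apply_le_dist x
  calc ‖∫ x, (f x - g x) ∂μ‖ ≤ dist f g * (μ Set.univ).toReal :=
        norm_integral_le_of_norm_le_const hb
    _ = (μ Set.univ).toNNReal * dist f g := by
        rw [mul_comm]; congr 1
  
lemma continuous_of_mem_VP (P : Measure (ℤ → Δ)) [IsProbabilityMeasure P]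
    {L : C((ℕ → Δ), ℝ) → ℝ} (hL : L ∈ VP P) : Continuous L := by
  induction hL using Submodule.span_induction with
  | mem g hg =>
    obtain ⟨n, w, rfl⟩ := hg
    exact continuous_funcOf _
  | zero => exact continuous_const
  | add a b _ _ ha hb => exact ha.add hb
  | smul r a _ ha => exact ha.const_smul r

-- block D

lemma setIntegral_futureMap (P : Measure (ℤ → Δ)) [IsProbabilityMeasure P]
    (hP : MeasurePreserving (fun (x : ℤ → Δ) (k : ℤ) => x (k + 1)) P P)
    {n : ℕ} (w : Fin n → Δ) (g : C((ℕ → Δ), ℝ)) :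
    ∫ ω in pastMap ⁻¹' cylN w, g (futureMap ω) ∂P =
      funcOf (tauMeas (Pnat P) (fun i => w i.rev)) g := by
  rw [← stationarity w P hP]
  exact (integral_map measurable_futureMap.aemeasurable
    g.continuous.aestronglyMeasurable).symm

lemma setIntegral_zero_of_cyl (P : Measure (ℤ → Δ)) [IsProbabilityMeasure P]
    {h : (ℤ → Δ) → ℝ} (hc : Continuous h)
    (h0 : ∀ (n : ℕ) (w : Fin n → Δ), ∫ ω in pastMap ⁻¹' cylN w, h ω ∂P = 0) :
    ∀ s : Set (ℤ → Δ), MeasurableSet[pastSA Δ] s → ∫ ω in s, h ω ∂P = 0 := by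
  have hint : Integrable h P := integrable_of_continuous P hc
  set H := BoundedContinuousFunction.mkOfCompact (⟨h, hc⟩ : C((ℤ → Δ), ℝ)) with hH
  have hfin : ∀ h' : (ℤ → Δ) → ℝ, Continuous h' → (∀ ω, |h' ω| ≤ ‖H‖) →
      IsFiniteMeasure (P.withDensity fun ω => ENNReal.ofReal (h' ω)) := by
    intro h' hc' hb'
    have hle : ∫⁻ ω, ENNReal.ofReal (h' ω) ∂P ≤ ENNReal.ofReal ‖H‖ * P Set.univ := by
      calc ∫⁻ ω, ENNReal.ofReal (h' ω) ∂P ≤ ∫⁻ _, ENNReal.ofReal ‖H‖ ∂P :=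
            lintegral_mono fun ω =>
              ENNReal.ofReal_le_ofReal ((le_abs_self _).trans (hb' ω))
        _ = ENNReal.ofReal ‖H‖ * P Set.univ := lintegral_const _
    exact isFiniteMeasure_withDensity
      (lt_of_le_of_lt hle (ENNReal.mul_lt_top ENNReal.ofReal_lt_top (measure_lt_top _ _))).ne
  have hb : ∀ ω, |h ω| ≤ ‖H‖ := fun ω => by
    have := H.norm_coe_le_norm ω
    simpa [hH] using this
  haveI i1 : IsFiniteMeasure (P.withDensity fun ω => ENNReal.ofReal (h ω)) :=
    hfin h hc hb
  haveI i2 : IsFiniteMeasure (P.withDensity fun ω => ENNReal.ofReal (-h ω)) :=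
    hfin _ hc.neg (fun ω => by rw [abs_neg]; exact hb ω)
  have key : ∀ A : Set (ℤ → Δ), MeasurableSet A →
      ∫ ω in A, h ω ∂P =
        ((P.withDensity fun ω => ENNReal.ofReal (h ω)) A).toReal -
        ((P.withDensity fun ω => ENNReal.ofReal (-h ω)) A).toReal := by
    intro A hA
    rw [integral_eq_lintegral_pos_part_sub_lintegral_neg_part hint.restrict,
      withDensity_apply _ hA, withDensity_apply _ hA]
  have hcylEq : ∀ (n : ℕ) (w : Fin n → Δ),
      (P.withDensity fun ω => ENNReal.ofReal (h ω)) (pastMap ⁻¹' cylN w) =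
      (P.withDensity fun ω => ENNReal.ofReal (-h ω)) (pastMap ⁻¹' cylN w) := by
    intro n w
    have hA : MeasurableSet (pastMap ⁻¹' cylN w) := measurable_pastMap (measurableSet_cylN w)
    have hk := key _ hA
    rw [h0 n w] at hk
    have heq : ((P.withDensity fun ω => ENNReal.ofReal (h ω)) (pastMap ⁻¹' cylN w)).toReal =
        ((P.withDensity fun ω => ENNReal.ofReal (-h ω)) (pastMap ⁻¹' cylN w)).toReal := by
      linarith
    exact (ENNReal.toReal_eq_toReal_iff' (measure_ne_top _ _) (measure_ne_top _ _)).mp heq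
  set μ1 := (P.withDensity fun ω => ENNReal.ofReal (h ω)).map pastMap with hμ1
  set μ2 := (P.withDensity fun ω => ENNReal.ofReal (-h ω)).map pastMap with hμ2
  haveI : IsFiniteMeasure μ1 := by
    constructor
    rw [hμ1, Measure.map_apply measurable_pastMap MeasurableSet.univ, Set.preimage_univ]
    exact measure_lt_top _ _
  have hequn : μ1 = μ2 := by
    apply ext_of_generate_finite _ generateFrom_cylN isPiSystem_cylN
    · rintro s ⟨n, w, rfl⟩
      rw [hμ1, hμ2, Measure.map_apply measurable_pastMap (measurableSet_cylN w),
        Measure.map_apply measurable_pastMap (measurableSet_cylN w)]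
      exact hcylEq n w
    · rw [hμ1, hμ2, Measure.map_apply measurable_pastMap MeasurableSet.univ,
        Measure.map_apply measurable_pastMap MeasurableSet.univ, Set.preimage_univ,
        ← Set.preimage_univ (f := pastMap), ← cylN_zero (fun i => i.elim0)]
      exact hcylEq 0 _
  rintro s ⟨B, hB, rfl⟩
  have hA : MeasurableSet (pastMap ⁻¹' B) := measurable_pastMap hB
  rw [key _ hA]
  have e1 : (P.withDensity fun ω => ENNReal.ofReal (h ω)) (pastMap ⁻¹' B) = μ1 B :=
    (Measure.map_apply measurable_pastMap hB).symm
  have e2 : (P.withDensity fun ω => ENNReal.ofReal (-h ω)) (pastMap ⁻¹' B) = μ2 B :=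
    (Measure.map_apply measurable_pastMap hB).symm
  rw [e1, e2, hequn, sub_self]

-- block E: evaluations span the dual
noncomputable def evalV (P : Measure (ℤ → Δ)) (g : C((ℕ → Δ), ℝ)) :
    Module.Dual ℝ (VP P) where
  toFun L := (L : C((ℕ → Δ), ℝ) → ℝ) g
  map_add' _ _ := rfl
  map_smul' _ _ := rfl

set_option synthInstance.maxHeartbeats 1000000 in
set_option maxHeartbeats 2000000 in
lemma span_evalV (P : Measure (ℤ → Δ)) [IsProbabilityMeasure P]
    (hfd : FiniteDimensional ℝ (VP P)) :
    Submodule.span ℝ (Set.range (evalV P)) = ⊤ := by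
  haveI := hfd
  haveI hd1 : FiniteDimensional ℝ (Module.Dual ℝ (VP P)) := inferInstance
  set W := Submodule.span ℝ (Set.range (evalV P)) with hW
  haveI hd2 : FiniteDimensional ℝ W := FiniteDimensional.finiteDimensional_submodule W
  haveI hdf : Module.Free ℝ (↥W) := Module.Free.of_divisionRing ℝ (↥W)
  haveI hd3 : FiniteDimensional ℝ (Module.Dual ℝ W) := Module.Finite.linearMap ℝ ℝ (↥W) ℝ
  let Φ : VP P →ₗ[ℝ] Module.Dual ℝ W :=
    { toFun := fun L =>
        { toFun := fun φ => (φ : Module.Dual ℝ (VP P)) L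
          map_add' := fun _ _ => rfl
          map_smul' := fun _ _ => rfl }
      map_add' := fun x y => by ext φ; exact map_add (φ : Module.Dual ℝ (VP P)) x y
      map_smul' := fun r x => by ext φ; exact map_smul (φ : Module.Dual ℝ (VP P)) r x }
  have hinj : Function.Injective Φ := by
    intro x y hxy
    apply Subtype.ext
    funext g
    have hg : evalV P g ∈ W := Submodule.subset_span (Set.mem_range_self g)
    have := congrArg (fun ψ : Module.Dual ℝ W => ψ ⟨evalV P g, hg⟩) hxy
    exact this
  have h1 : Module.finrank ℝ (VP P) ≤ Module.finrank ℝ (Module.Dual ℝ W) :=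
    LinearMap.finrank_le_finrank_of_injective hinj
  have hdw : Module.finrank ℝ (Module.Dual ℝ W) = Module.finrank ℝ W :=
    by exact Subspace.dual_finrank_eq (K := ℝ) (V := ↥W)
  have hdv : Module.finrank ℝ (Module.Dual ℝ (VP P)) = Module.finrank ℝ (VP P) :=
    by exact Subspace.dual_finrank_eq (K := ℝ) (V := ↥(VP P))
  have h3 : Module.finrank ℝ W ≤ Module.finrank ℝ (Module.Dual ℝ (VP P)) :=
    Submodule.finrank_le W
  apply Submodule.eq_top_of_finrank_eq
  omega

lemma coe_sum_smul_apply (P : Measure (ℤ → Δ)) {ι : Type*} (s : Finset ι)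
    (r : ι → ℝ) (x : ι → VP P) (g : C((ℕ → Δ), ℝ)) :
    ((∑ i ∈ s, r i • x i : VP P) : C((ℕ → Δ), ℝ) → ℝ) g =
      ∑ i ∈ s, r i * ((x i : C((ℕ → Δ), ℝ) → ℝ) g) := by
  rw [AddSubmonoidClass.coe_finset_sum]
  rw [Finset.sum_apply]
  exact Finset.sum_congr rfl fun i _ => rfl


/-- If the canonical OOM vector space `V_P` of a stationary process `P` is
finite dimensional, then the conditional future distribution takes values in
`V_P ∩ P(Δ^ℕ)` almost surely; in particular the support of the causal state distribution is
contained in this finite-dimensional affine set. -/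
theorem stmt19 [StandardBorelSpace Δ]
    [MeasurableSpace (ProbabilityMeasure (ℕ → Δ))] [BorelSpace (ProbabilityMeasure (ℕ → Δ))]
    (P : Measure (ℤ → Δ)) [IsProbabilityMeasure P]
    (hP : MeasurePreserving (fun (x : ℤ → Δ) (k : ℤ) => x (k + 1)) P P)
    (hfd : FiniteDimensional ℝ (VP P)) :
    (∀ᵐ ω ∂P, funcOf (condFuture P ω) ∈ VP P) ∧
    msupport (causalDist P) ⊆
      {ρ : ProbabilityMeasure (ℕ → Δ) | funcOf (ρ : Measure (ℕ → Δ)) ∈ VP P} := by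
  classical
  haveI := hfd
  have hm : pastSA Δ ≤ (inferInstance : MeasurableSpace (ℤ → Δ)) := by
    intro s hs
    obtain ⟨B, hB, rfl⟩ := hs
    exact measurable_pastMap hB
  set d := Module.finrank ℝ (VP P) with hdd
  let c : Module.Basis (Fin d) ℝ (VP P) := Module.finBasis ℝ (VP P)
  have hrep : ∀ i : Fin d, ∃ (mm : ℕ) (aa : Fin mm → ℝ) (ff : Fin mm → C((ℕ → Δ), ℝ)),
      c.coord i = ∑ j, aa j • evalV P (ff j) := by
    intro i
    have hmem : c.coord i ∈ Submodule.span ℝ (Set.range (evalV P)) := by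
      rw [span_evalV P hfd]; trivial
    rw [Submodule.mem_span_set'] at hmem
    obtain ⟨mm, aa, gsub, hg⟩ := hmem
    choose ff hff using fun j => (gsub j).2
    refine ⟨mm, aa, ff, ?_⟩
    rw [← hg]
    exact (Finset.sum_congr rfl fun j _ => by rw [hff j]).symm
  choose m a f hf using hrep
  have hkey : ∀ (L : VP P) (g : C((ℕ → Δ), ℝ)),
      (L : C((ℕ → Δ), ℝ) → ℝ) g =
        ∑ i, (∑ j, a i j * (L : C((ℕ → Δ), ℝ) → ℝ) (f i j)) *
          ((c i : C((ℕ → Δ), ℝ) → ℝ) g) := by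
    intro L g
    have h2 : ∀ i, c.repr L i = ∑ j, a i j * (L : C((ℕ → Δ), ℝ) → ℝ) (f i j) := by
      intro i
      rw [← Module.Basis.coord_apply, hf i]
      simp [evalV]
    conv_lhs => rw [← c.sum_repr L]
    rw [coe_sum_smul_apply]
    exact Finset.sum_congr rfl fun i _ => by rw [h2 i]
  -- the a.e. linear relation for each test function g
  have hrel : ∀ g : C((ℕ → Δ), ℝ), ∀ᵐ ω ∂P,
      funcOf (condFuture P ω) g =
        ∑ i, (∑ j, a i j * funcOf (condFuture P ω) (f i j)) *
          ((c i : C((ℕ → Δ), ℝ) → ℝ) g) := by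
    intro g
    have hcont2 : ∀ i : Fin d, Continuous fun ω' : ℤ → Δ =>
        ((c i : C((ℕ → Δ), ℝ) → ℝ) g) * ∑ j, a i j * (f i j) (futureMap ω') := fun i =>
      continuous_const.mul (continuous_finset_sum _ fun j _ =>
        continuous_const.mul ((f i j).continuous.comp continuous_futureMap))
    set hφ : (ℤ → Δ) → ℝ := fun ω => g (futureMap ω) -
        ∑ i, ((c i : C((ℕ → Δ), ℝ) → ℝ) g) * ∑ j, a i j * (f i j) (futureMap ω) with hφdef
    have hφc : Continuous hφ :=
      (g.continuous.comp continuous_futureMap).sub (continuous_finset_sum _ fun i _ => hcont2 i)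
    have hexp : ∀ (μ : Measure (ℤ → Δ)), IsFiniteMeasure μ →
        ∫ ω', hφ ω' ∂μ = (∫ ω', g (futureMap ω') ∂μ) -
          ∑ i, ((c i : C((ℕ → Δ), ℝ) → ℝ) g) *
            ∑ j, a i j * ∫ ω', (f i j) (futureMap ω') ∂μ := by
      intro μ hμ
      haveI := hμ
      simp only [hφdef]
      rw [integral_sub (integrable_of_continuous μ
          (show Continuous fun ω' : ℤ → Δ => g (futureMap ω') from
            g.continuous.comp continuous_futureMap))
        (integrable_of_continuous μ
          (show Continuous fun ω' : ℤ → Δ => ∑ i, ((c i : C((ℕ → Δ), ℝ) → ℝ) g) *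
              ∑ j, a i j * (f i j) (futureMap ω') from
            continuous_finset_sum _ fun i _ => hcont2 i))]
      congr 1
      rw [integral_finset_sum _ (fun i _ => integrable_of_continuous μ (hcont2 i))]
      refine Finset.sum_congr rfl fun i _ => ?_
      rw [integral_const_mul]
      congr 1
      rw [integral_finset_sum _ (fun j _ => integrable_of_continuous μ
        (show Continuous fun ω' : ℤ → Δ => a i j * (f i j) (futureMap ω') from
          continuous_const.mul ((f i j).continuous.comp continuous_futureMap)))]
      exact Finset.sum_congr rfl fun j _ => integral_const_mul _ _
    have h0 : ∀ (n : ℕ) (w : Fin n → Δ), ∫ ω in pastMap ⁻¹' cylN w, hφ ω ∂P = 0 := by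
      intro n w
      have hLV : funcOf (tauMeas (Pnat P) (fun i => w i.rev)) ∈ VP P :=
        Submodule.subset_span ⟨n, _, rfl⟩
      have e1 : ∀ φ : C((ℕ → Δ), ℝ), ∫ ω in pastMap ⁻¹' cylN w, φ (futureMap ω) ∂P =
          funcOf (tauMeas (Pnat P) (fun i => w i.rev)) φ := fun φ =>
        setIntegral_futureMap P hP w φ
      rw [hexp (P.restrict (pastMap ⁻¹' cylN w)) inferInstance]
      simp only [e1]
      rw [sub_eq_zero]
      have hk : funcOf (tauMeas (Pnat P) (fun i => w i.rev)) g =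
          ∑ i, (∑ j, a i j * funcOf (tauMeas (Pnat P) (fun i => w i.rev)) (f i j)) *
            ((c i : C((ℕ → Δ), ℝ) → ℝ) g) := hkey ⟨_, hLV⟩ g
      rw [hk]
      exact Finset.sum_congr rfl fun i _ => mul_comm _ _
    have hInt : Integrable hφ P := integrable_of_continuous P hφc
    have hze : (0 : (ℤ → Δ) → ℝ) =ᵐ[P] P[hφ | pastSA Δ] :=
      ae_eq_condExp_of_forall_setIntegral_eq hm hInt
        (fun s _ _ => integrableOn_zero)
        (fun s hs _ => by rw [setIntegral_zero_of_cyl P hφc h0 s hs]; simp)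
        (StronglyMeasurable.aestronglyMeasurable (@stronglyMeasurable_zero _ _ (pastSA Δ) _ _))
    have hker := condExp_ae_eq_integral_condExpKernel (μ := P) hm hInt
    filter_upwards [hze, hker] with ω h1 h2
    haveI : IsProbabilityMeasure ((condExpKernel P (pastSA Δ)) ω) :=
      IsMarkovKernel.isProbabilityMeasure ω
    have h3 : ∫ y, hφ y ∂(condExpKernel P (pastSA Δ)) ω = 0 := by
      rw [← h2]; exact h1.symm
    have hmapint : ∀ φ : C((ℕ → Δ), ℝ),
        funcOf (condFuture P ω) φ =
          ∫ y, φ (futureMap y) ∂(condExpKernel P (pastSA Δ)) ω := fun φ =>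
      integral_map measurable_futureMap.aemeasurable φ.continuous.aestronglyMeasurable
    rw [hexp _ inferInstance, sub_eq_zero] at h3
    simp only [hmapint]
    rw [h3]
    exact Finset.sum_congr rfl fun i _ => mul_comm _ _
  -- part 1
  obtain ⟨D, hDc, hDd⟩ := TopologicalSpace.exists_countable_dense C((ℕ → Δ), ℝ)
  have haeD : ∀ᵐ ω ∂P, ∀ g ∈ D,
      funcOf (condFuture P ω) g =
        ∑ i, (∑ j, a i j * funcOf (condFuture P ω) (f i j)) *
          ((c i : C((ℕ → Δ), ℝ) → ℝ) g) :=
    (ae_ball_iff hDc).mpr fun g _ => hrel g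
  have part1 : ∀ᵐ ω ∂P, funcOf (condFuture P ω) ∈ VP P := by
    filter_upwards [haeD] with ω hω
    haveI : IsProbabilityMeasure (condFuture P ω) := (condFutureP P ω).2
    set Lω : VP P := ∑ i, (∑ j, a i j * funcOf (condFuture P ω) (f i j)) • c i with hLω
    have heq : funcOf (condFuture P ω) = (Lω : C((ℕ → Δ), ℝ) → ℝ) := by
      refine Continuous.ext_on hDd (continuous_funcOf _) (continuous_of_mem_VP P Lω.2) ?_
      intro g hg
      rw [hω g hg, hLω, coe_sum_smul_apply]
    rw [heq]
    exact Lω.2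
  refine ⟨part1, ?_⟩
  -- part 2
  have hVclosed : IsClosed ((VP P : Set (C((ℕ → Δ), ℝ) → ℝ))) :=
    Submodule.closed_of_finiteDimensional _
  have hFcont : Continuous (fun ρ : ProbabilityMeasure (ℕ → Δ) =>
      funcOf (ρ : Measure (ℕ → Δ))) := by
    refine continuous_pi fun g => ?_
    have := ProbabilityMeasure.continuous_integral_boundedContinuousFunction
      (X := ℕ → Δ) (BoundedContinuousFunction.mkOfCompact g)
    simpa [funcOf] using this
  have hSclosed : IsClosed {ρ : ProbabilityMeasure (ℕ → Δ) |
      funcOf (ρ : Measure (ℕ → Δ)) ∈ VP P} := hVclosed.preimage hFcont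
  by_cases hmeas : AEMeasurable (condFutureP P) P
  · intro ρ hρ
    by_contra hρS
    have hopen : IsOpen {ρ : ProbabilityMeasure (ℕ → Δ) |
        funcOf (ρ : Measure (ℕ → Δ)) ∈ VP P}ᶜ := hSclosed.isOpen_compl
    refine hρ _ hopen hρS ?_
    rw [causalDist, Measure.map_apply_of_aemeasurable hmeas hopen.measurableSet]
    have hset : (condFutureP P) ⁻¹' ({ρ : ProbabilityMeasure (ℕ → Δ) |
        funcOf (ρ : Measure (ℕ → Δ)) ∈ VP P}ᶜ) =
        {ω | ¬ funcOf (condFuture P ω) ∈ VP P} := rfl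
    rw [hset]
    exact ae_iff.mp part1
  · intro ρ hρ
    exfalso
    refine hρ Set.univ isOpen_univ (Set.mem_univ ρ) ?_
    rw [causalDist, Measure.map_of_not_aemeasurable hmeas]
    rfl
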